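/- Let f ∈ ℝ[x], let J be an ideal of ℝ[x], and suppose f^η ∈ J for some integer η > 0. For ε > 0 define s_ε(x) = √ε · ∑_{j=0}^{η−1} C(1/2, j) (f(x)/ε)^j and σ_ε = s_ε², where C(1/2, j) are the binomial coefficients of (1+t)^{1/2}. Then f + ε − σ_ε ∈ J, σ_ε is a sum of squares, and deg(σ_ε) ≤ 2(η−1)·deg(f) is independent of ε. -/

import Mathlib

open Polynomial in
lemma descP_smeval_prod (r : ℝ) (k : ℕ) :
    (descPochhammer ℤ k).smeval r = ∏ i ∈ Finset.range k, (r - i) := by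
  induction k with
  | zero => simp
  | succ k ih =>
      rw [descPochhammer_succ_right, Polynomial.smeval_mul, ih, Finset.prod_range_succ]
      congr 1
      simp [Polynomial.smeval_sub, Polynomial.smeval_X, Polynomial.smeval_natCast]

lemma choose_eq (r : ℝ) (k : ℕ) :
    Ring.choose r k = (∏ i ∈ Finset.range k, (r - i)) / (Nat.factorial k) := by
  have h := Ring.descPochhammer_eq_factorial_smul_choose r k
  rw [descP_smeval_prod] at h
  field_simp [h, Nat.factorial_ne_zero, mul_comm]
  rw [h, nsmul_eq_mul, mul_comm]

lemma conv_id (c : ℕ → ℝ)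
    (hc : ∀ j, c j = (∏ i ∈ Finset.range j, ((1:ℝ)/2 - i)) / (Nat.factorial j)) (k : ℕ) :
    ∑ ij ∈ Finset.HasAntidiagonal.antidiagonal k, c ij.1 * c ij.2 = (Nat.choose 1 k : ℝ) := by
  have hcc : ∀ j, c j = Ring.choose ((1:ℝ)/2) j := fun j => by rw [hc j, choose_eq]
  have h := Ring.add_choose_eq (R := ℝ) (r := 1/2) (s := 1/2) k (Commute.all _ _)
  norm_num at h
  rw [← Ring.choose_natCast (R := ℝ) 1 k, Nat.cast_one]
  rw [h]
  exact Finset.sum_congr rfl fun ij _ => by rw [hcc ij.1, hcc ij.2]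

open Polynomial in
lemma key_dvd (η : ℕ) (c : ℕ → ℝ)
    (hconv : ∀ k, ∑ ij ∈ Finset.HasAntidiagonal.antidiagonal k, c ij.1 * c ij.2 = (Nat.choose 1 k : ℝ)) :
    (X : ℝ[X]) ^ η ∣ (∑ j ∈ Finset.range η, C (c j) * X ^ j) ^ 2 - (1 + X) := by
  set P : ℝ[X] := ∑ j ∈ Finset.range η, C (c j) * X ^ j with hP
  have hcoeff : ∀ i, P.coeff i = if i < η then c i else 0 := by
    intro i
    rw [hP, Polynomial.finset_sum_coeff]
    simp only [Polynomial.coeff_C_mul, Polynomial.coeff_X_pow, mul_ite, mul_one, mul_zero]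
    rw [Finset.sum_ite_eq (Finset.range η) i c]
    simp [Finset.mem_range]
  rw [Polynomial.X_pow_dvd_iff]
  intro d hd
  rw [Polynomial.coeff_sub, sq, Polynomial.coeff_mul]
  have : ∀ ij ∈ Finset.HasAntidiagonal.antidiagonal d, P.coeff ij.1 * P.coeff ij.2 = c ij.1 * c ij.2 := by
    intro ij hij
    have h1 : ij.1 ≤ d := Finset.HasAntidiagonal.antidiagonal.fst_le hij
    have h2 : ij.2 ≤ d := Finset.HasAntidiagonal.antidiagonal.snd_le hij
    rw [hcoeff, hcoeff, if_pos (lt_of_le_of_lt h1 hd), if_pos (lt_of_le_of_lt h2 hd)]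
  rw [Finset.sum_congr rfl this, hconv d, Polynomial.coeff_add, Polynomial.coeff_one,
    Polynomial.coeff_X]
  match d with
  | 0 => norm_num
  | 1 => norm_num
  | (n+2) => simp [Nat.choose_eq_zero_of_lt (by omega : 1 < n + 2)]


/-- If `f^η ∈ J`, then for every `ε > 0` the truncated square-root
polynomial `s_ε = √ε ∑_{j<η} C(1/2,j)(f/ε)^j` satisfies `f + ε − s_ε² ∈ J`,
`s_ε²` is SOS, and `deg(s_ε²) ≤ 2(η−1)deg f`. -/
theorem stmt12 (n : ℕ) (f : MvPolynomial (Fin n) ℝ)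
    (J : Ideal (MvPolynomial (Fin n) ℝ))
    (η : ℕ) (hη : 0 < η) (hf : f ^ η ∈ J) (ε : ℝ) (hε : 0 < ε)
    -- the generalized binomial coefficients C(1/2, j):
    (c : ℕ → ℝ)
    (hc : ∀ j, c j = (∏ i ∈ Finset.range j, ((1:ℝ)/2 - i)) / (Nat.factorial j))
    (s : MvPolynomial (Fin n) ℝ)
    (hs : s = MvPolynomial.C (Real.sqrt ε) *
          ∑ j ∈ Finset.range η, MvPolynomial.C (c j) * (MvPolynomial.C ε⁻¹ * f) ^ j) :
    (f + MvPolynomial.C ε - s ^ 2 ∈ J) ∧ IsSumSq (s ^ 2) ∧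
      (s ^ 2).totalDegree ≤ 2 * (η - 1) * f.totalDegree := by
  classical
  set g : MvPolynomial (Fin n) ℝ := MvPolynomial.C ε⁻¹ * f with hg
  obtain ⟨Q, hQ⟩ := key_dvd η c (conv_id c hc)
  set P : Polynomial ℝ := ∑ j ∈ Finset.range η, Polynomial.C (c j) * Polynomial.X ^ j with hP
  have hPQ : P ^ 2 = 1 + Polynomial.X + Polynomial.X ^ η * Q := by
    rw [← hQ]; ring
  -- aeval of P at g is the sum appearing in s
  have hAP : Polynomial.aeval g P = ∑ j ∈ Finset.range η, MvPolynomial.C (c j) * g ^ j := by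
    rw [hP, map_sum]
    refine Finset.sum_congr rfl fun j _ => ?_
    simp [MvPolynomial.algebraMap_eq]
  have hεne : (ε : ℝ) ≠ 0 := ne_of_gt hε
  have hs2 : s ^ 2 = MvPolynomial.C ε *
      (1 + g + g ^ η * Polynomial.aeval g Q) := by
    have h1 : (MvPolynomial.C (Real.sqrt ε) : MvPolynomial (Fin n) ℝ) ^ 2
        = MvPolynomial.C ε := by
      rw [← map_pow, sq, Real.mul_self_sqrt hε.le]
    have h2 : (Polynomial.aeval g) P ^ 2 = (Polynomial.aeval g) (P ^ 2) :=
      (map_pow _ _ _).symm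
    rw [hs, ← hAP, mul_pow, h1, h2, hPQ]
    simp [MvPolynomial.algebraMap_eq]
  have hCe : (MvPolynomial.C ε : MvPolynomial (Fin n) ℝ) * MvPolynomial.C ε⁻¹ = 1 := by
    rw [← map_mul, mul_inv_cancel₀ hεne, map_one]
  refine ⟨?_, ?_, ?_⟩
  · have heq : f + MvPolynomial.C ε - s ^ 2 =
        (-(MvPolynomial.C ε * (MvPolynomial.C ε⁻¹) ^ η * Polynomial.aeval g Q)) * f ^ η := by
      rw [hs2, hg]
      linear_combination (-f) * hCe
    rw [heq]
    exact J.mul_mem_left _ hf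
  · rw [sq]
    simpa using IsSumSq.sq_add s 0 IsSumSq.zero
  · have hgdeg : g.totalDegree ≤ f.totalDegree := by
      calc g.totalDegree ≤ (MvPolynomial.C ε⁻¹ : MvPolynomial (Fin n) ℝ).totalDegree
            + f.totalDegree := MvPolynomial.totalDegree_mul _ _
        _ = f.totalDegree := by rw [MvPolynomial.totalDegree_C, zero_add]
    have hsdeg : s.totalDegree ≤ (η - 1) * f.totalDegree := by
      rw [hs]
      calc (MvPolynomial.C (Real.sqrt ε) * ∑ j ∈ Finset.range η,
              MvPolynomial.C (c j) * g ^ j).totalDegree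
          ≤ _ + (∑ j ∈ Finset.range η, MvPolynomial.C (c j) * g ^ j).totalDegree :=
            MvPolynomial.totalDegree_mul _ _
        _ = (∑ j ∈ Finset.range η, MvPolynomial.C (c j) * g ^ j).totalDegree := by
            rw [MvPolynomial.totalDegree_C, zero_add]
        _ ≤ (η - 1) * f.totalDegree := by
            refine (MvPolynomial.totalDegree_finset_sum _ _).trans ?_
            refine Finset.sup_le fun j hj => ?_
            have hj' : j ≤ η - 1 := Nat.le_sub_one_of_lt (Finset.mem_range.mp hj)
            calc (MvPolynomial.C (c j) * g ^ j).totalDegree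
                ≤ _ + (g ^ j).totalDegree := MvPolynomial.totalDegree_mul _ _
              _ = (g ^ j).totalDegree := by rw [MvPolynomial.totalDegree_C, zero_add]
              _ ≤ j * g.totalDegree := MvPolynomial.totalDegree_pow _ _
              _ ≤ (η - 1) * f.totalDegree :=
                  Nat.mul_le_mul hj' hgdeg
    calc (s ^ 2).totalDegree ≤ 2 * s.totalDegree := MvPolynomial.totalDegree_pow _ _
      _ ≤ 2 * ((η - 1) * f.totalDegree) := Nat.mul_le_mul_left _ hsdeg
      _ = 2 * (η - 1) * f.totalDegree := (mul_assoc _ _ _).symm
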